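/- Let k ≥ 1, m = 2k + 1, and let e ≥ 1 be an integer with gcd(e, m) = 1. Let F = 𝔽_{2^m}, let f : F → 𝔽₂ be f(x) = Tr(x^{2^e + 1}), and let S = supp(f) = {x ∈ F : f(x) = 1}. Then |S| = 2^{2k}. Let G = 𝔽₂ × F and S' = {(ε, z) ∈ G : ε ∈ 𝔽₂, z ∈ S}, and set a = (0, 0), b = (1, 1), c = (0, 1), d = (1, 0) in G. Then the cubelike graph Γ = Cay(G, S') has PEST from the edge (a,b) to the edge (c,d) at time π/2^{k+1}. -/

import Mathlib

open Matrix Finset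

noncomputable section

noncomputable instance (m : ℕ) : Fintype (GaloisField 2 m) := Fintype.ofFinite _
noncomputable instance (m : ℕ) : DecidableEq (GaloisField 2 m) := Classical.decEq _

/-- The absolute trace map `Tr : 𝔽_{2^m} → 𝔽₂`. -/
def Ftr {m : ℕ} (x : GaloisField 2 m) : ZMod 2 :=
  Algebra.trace (ZMod 2) (GaloisField 2 m) x

/-- The adjacency matrix of the Cayley (cubelike) graph `Cay(G, S)`. -/
def adjMatrix {G : Type*} [AddCommGroup G] [Fintype G] [DecidableEq G]
    (S : Finset G) : Matrix G G ℂ :=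
  fun u v => if u + v ∈ S then 1 else 0

/-- The transfer matrix `H(t) = exp(i t A)`. -/
def transferMatrix {G : Type*} [AddCommGroup G] [Fintype G] [DecidableEq G]
    (S : Finset G) (t : ℝ) : Matrix G G ℂ :=
  NormedSpace.exp (Complex.I • ((t : ℂ) • adjMatrix S))

/-- The standard basis vector `e_a` of `ℂ^V`. -/
def stdBasis {G : Type*} [DecidableEq G] (a : G) : G → ℂ :=
  fun v => if v = a then 1 else 0

/-- Perfect edge state transfer from the edge `(a,b)` to the edge `(c,d)` at time `t`:
`|(1/2)(e_c - e_d)ᵀ H(t)(e_a - e_b)|² = 1`. -/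
def hasPEST {G : Type*} [AddCommGroup G] [Fintype G] [DecidableEq G]
    (S : Finset G) (a b c d : G) (t : ℝ) : Prop :=
  ‖(1 / 2 : ℂ) * dotProduct (stdBasis c - stdBasis d)
      (transferMatrix S t *ᵥ (stdBasis a - stdBasis b))‖ ^ 2 = 1

/-- The eigenvalue `λ_x = ∑_{s ∈ S} (-1)^{Tr(xs)}` of a cubelike graph on `𝔽_{2^m}`. -/
def lamF {m : ℕ} (S : Finset (GaloisField 2 m)) (x : GaloisField 2 m) : ℤ :=
  ∑ s ∈ S, (-1) ^ (Ftr (x * s)).val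

variable {m : ℕ}

lemma Ftr_add (x y : GaloisField 2 m) : Ftr (x + y) = Ftr x + Ftr y :=
  map_add (Algebra.trace (ZMod 2) (GaloisField 2 m)) x y

lemma Ftr_zero : Ftr (0 : GaloisField 2 m) = 0 :=
  map_zero (Algebra.trace (ZMod 2) (GaloisField 2 m))

lemma neg_one_pow_val_add {R : Type*} [Monoid R] [HasDistribNeg R] (a b : ZMod 2) :
    (-1 : R) ^ ((a + b).val) = (-1) ^ a.val * (-1) ^ b.val := by
  fin_cases a <;> fin_cases b
  · show (-1 : R) ^ 0 = (-1) ^ 0 * (-1) ^ 0; simp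
  · show (-1 : R) ^ 1 = (-1) ^ 0 * (-1) ^ 1; simp
  · show (-1 : R) ^ 1 = (-1) ^ 1 * (-1) ^ 0; simp
  · show (-1 : R) ^ 0 = (-1) ^ 1 * (-1) ^ 1; simp

/-- Frobenius as an algebra equivalence of `GaloisField 2 m` over `ZMod 2`. -/
def frobAE (m : ℕ) : GaloisField 2 m ≃ₐ[ZMod 2] GaloisField 2 m :=
  AlgEquiv.ofBijective
    { toRingHom := frobenius (GaloisField 2 m) 2
      commutes' := by
        intro r
        show (algebraMap (ZMod 2) (GaloisField 2 m) r) ^ 2 = _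
        have : r ^ 2 = r := by fin_cases r <;> rfl
        rw [← map_pow, this] }
    ((Finite.injective_iff_bijective).1 (frobenius (GaloisField 2 m) 2).injective)

lemma frobAE_apply (x : GaloisField 2 m) : frobAE m x = x ^ 2 := rfl

lemma Ftr_sq (x : GaloisField 2 m) : Ftr (x ^ 2) = Ftr x := by
  have h := FaithfulSMul.algebraMap_injective (ZMod 2) (GaloisField 2 m)
  apply h
  rw [show x ^ 2 = frobAE m x from rfl]
  unfold Ftr
  rw [trace_eq_sum_automorphisms, trace_eq_sum_automorphisms]
  exact Fintype.sum_equiv (Equiv.mulRight (frobAE m)) _ _ (fun σ => rfl)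

lemma Ftr_one (hm : Odd m) (hm0 : m ≠ 0) : Ftr (1 : GaloisField 2 m) = 1 := by
  unfold Ftr
  have := Algebra.trace_algebraMap (R := ZMod 2) (S := GaloisField 2 m) (1 : ZMod 2)
  rw [_root_.map_one] at this
  rw [this, GaloisField.finrank 2 hm0, nsmul_eq_mul, mul_one]
  obtain ⟨j, hj⟩ := hm
  subst hj
  push_cast
  ring_nf
  simp [show ((2:ZMod 2)) = 0 from by decide]

/-! ### Character sums -/

def eps {m : ℕ} (x : GaloisField 2 m) : ℤ := (-1) ^ (Ftr x).val

lemma eps_add (x y : GaloisField 2 m) : eps (x + y) = eps x * eps y := by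
  unfold eps; rw [Ftr_add, neg_one_pow_val_add]

lemma eps_zero : eps (0 : GaloisField 2 m) = 1 := by unfold eps; rw [Ftr_zero]; rfl

lemma eps_eq_one (x : GaloisField 2 m) (h : Ftr x = 0) : eps x = 1 := by
  unfold eps; rw [h]; rfl

lemma eps_eq_neg_one (x : GaloisField 2 m) (h : Ftr x = 1) : eps x = -1 := by
  unfold eps; rw [h, ZMod.val_one]; ring

lemma exists_Ftr_one : ∃ z : GaloisField 2 m, Ftr z = 1 := by
  obtain ⟨z, hz⟩ := Algebra.trace_surjective (ZMod 2) (GaloisField 2 m) 1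
  exact ⟨z, hz⟩

lemma card_GF (hm0 : m ≠ 0) : Fintype.card (GaloisField 2 m) = 2 ^ m := by
  rw [← Nat.card_eq_fintype_card]; exact GaloisField.card 2 m hm0

lemma sum_eps_mul (hm0 : m ≠ 0) (c : GaloisField 2 m) :
    ∑ x : GaloisField 2 m, eps (c * x) = if c = 0 then (2 ^ m : ℤ) else 0 := by
  split_ifs with hc
  · subst hc
    simp only [zero_mul, eps_zero, Finset.sum_const, nsmul_eq_mul, mul_one]
    rw [Finset.card_univ, card_GF hm0]; push_cast; ring
  · obtain ⟨z, hz⟩ := exists_Ftr_one (m := m)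
    set x0 : GaloisField 2 m := c⁻¹ * z with hx0
    have h0 : Ftr (c * x0) = 1 := by
      rw [hx0, ← mul_assoc, mul_inv_cancel₀ hc, one_mul]; exact hz
    have key : ∀ x, eps (c * (x + x0)) = -eps (c * x) := by
      intro x
      rw [mul_add, eps_add, eps_eq_neg_one _ h0, mul_neg, mul_one]
    have h1 : ∑ x : GaloisField 2 m, eps (c * (x + x0))
        = ∑ x : GaloisField 2 m, eps (c * x) :=
      Fintype.sum_equiv (Equiv.addRight x0) _ _ (fun x => rfl)
    have h2 : ∑ x : GaloisField 2 m, eps (c * (x + x0))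
        = -∑ x : GaloisField 2 m, eps (c * x) := by
      simp_rw [key]; rw [Finset.sum_neg_distrib]
    omega

/-! ### Power reduction lemmas -/

lemma pow_two_pow_add {F : Type*} [CommRing F] (w : F) (a b : ℕ) :
    w ^ (2 ^ (a + b)) = (w ^ (2 ^ a)) ^ (2 ^ b) := by
  rw [← pow_mul, ← pow_add]

lemma pow_card_GF (hm0 : m ≠ 0) (w : GaloisField 2 m) : w ^ (2 ^ m) = w := by
  have := FiniteField.pow_card w
  rwa [card_GF hm0] at this

lemma pow_fix_reduce {F : Type*} [CommRing F] (w : F) (a : ℕ)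
    (hw : w ^ (2 ^ a) = w) : ∀ q r, w ^ (2 ^ (a * q + r)) = w ^ (2 ^ r) := by
  intro q
  induction q with
  | zero => simp
  | succ q ih =>
    intro r
    have : a * (q + 1) + r = a + (a * q + r) := by ring
    rw [this, pow_two_pow_add w a (a * q + r), hw, ih]

lemma pow_fix_gcd {F : Type*} [CommRing F] :
    ∀ a, ∀ b, ∀ w : F, w ^ (2 ^ a) = w → w ^ (2 ^ b) = w →
      w ^ (2 ^ (Nat.gcd a b)) = w := by
  intro a
  induction a using Nat.strong_induction_on with
  | _ a IH =>
    intro b w ha hb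
    rcases Nat.eq_zero_or_pos a with rfl | hpos
    · simpa using hb
    · rw [Nat.gcd_rec a b]
      have hmod : w ^ (2 ^ (b % a)) = w := by
        have h2 := pow_fix_reduce w a ha (b / a) (b % a)
        rw [Nat.div_add_mod] at h2
        exact h2.symm.trans hb
      exact IH (b % a) (Nat.mod_lt b hpos) a w hmod ha

lemma sq_eq_self_iff (w : GaloisField 2 m) : w ^ 2 = w ↔ w = 0 ∨ w = 1 := by
  constructor
  · intro h
    have : w * (w - 1) = 0 := by linear_combination h
    rcases mul_eq_zero.1 this with h' | h'
    · exact Or.inl h'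
    · exact Or.inr (sub_eq_zero.1 h')
  · rintro (rfl | rfl) <;> simp

lemma Ftr_pow_two_pow (j : ℕ) (x : GaloisField 2 m) : Ftr (x ^ (2 ^ j)) = Ftr x := by
  induction j with
  | zero => simp
  | succ j ih =>
    rw [pow_two_pow_add x j 1, pow_one, Ftr_sq, ih]

lemma roots_L (hm0 : m ≠ 0) {E : ℕ} (hEm : E < m) (hg : Nat.gcd (2 * E) m = 1)
    (w : GaloisField 2 m) :
    w ^ (2 ^ (m - E)) + w ^ (2 ^ E) = 0 ↔ w = 0 ∨ w = 1 := by
  constructor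
  · intro h
    have hw : w ^ (2 ^ E) = w ^ (2 ^ (m - E)) := by
      have h' := add_eq_zero_iff_eq_neg.1 h
      rw [CharTwo.neg_eq] at h'
      exact h'.symm
    have h2E : w ^ (2 ^ (2 * E)) = w := by
      have e1 : w ^ (2 ^ (E + E)) = (w ^ (2 ^ E)) ^ (2 ^ E) := pow_two_pow_add w E E
      have e2 : w ^ (2 ^ ((m - E) + E)) = (w ^ (2 ^ (m - E))) ^ (2 ^ E) :=
        pow_two_pow_add w (m - E) E
      rw [Nat.sub_add_cancel hEm.le] at e2
      rw [show 2 * E = E + E by ring, e1, hw, ← e2, pow_card_GF hm0]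
    have := pow_fix_gcd (2 * E) m w h2E (pow_card_GF hm0 w)
    rw [hg, pow_one] at this
    exact (sq_eq_self_iff w).1 this
  · rintro (rfl | rfl)
    · rw [zero_pow (by positivity), zero_pow (by positivity), add_zero]
    · rw [one_pow, one_pow, CharTwo.add_self_eq_zero]

lemma walsh_sq (hm0 : m ≠ 0) {E : ℕ} (hEm : E < m) (hg : Nat.gcd (2 * E) m = 1)
    (a : GaloisField 2 m) :
    (∑ x : GaloisField 2 m, eps (x ^ (2 ^ E + 1) + a * x)) ^ 2
      = 2 ^ m * (1 + eps (1 + a)) := by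
  have h2c : (2 : GaloisField 2 m) = 0 := by
    have : CharP (GaloisField 2 m) 2 := inferInstance
    exact CharTwo.two_eq_zero
  -- expand square as double sum
  rw [sq, Finset.sum_mul_sum]
  have hsplit : ∀ x y : GaloisField 2 m,
      eps (x ^ (2 ^ E + 1) + a * x) * eps (y ^ (2 ^ E + 1) + a * y)
        = eps ((x ^ (2 ^ E + 1) + a * x) + (y ^ (2 ^ E + 1) + a * y)) :=
    fun x y => (eps_add _ _).symm
  simp_rw [hsplit]
  -- reindex inner sum
  have hreindex : ∀ x : GaloisField 2 m,
      ∑ y : GaloisField 2 m, eps ((x ^ (2 ^ E + 1) + a * x) + (y ^ (2 ^ E + 1) + a * y))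
      = ∑ w : GaloisField 2 m,
          eps ((x ^ (2 ^ E + 1) + a * x) + ((x + w) ^ (2 ^ E + 1) + a * (x + w))) := by
    intro x
    exact (Fintype.sum_equiv (Equiv.addLeft x) _ _ (fun w => rfl)).symm
  simp_rw [hreindex]
  -- algebraic expansion
  have hexpand : ∀ x w : GaloisField 2 m,
      (x ^ (2 ^ E + 1) + a * x) + ((x + w) ^ (2 ^ E + 1) + a * (x + w))
        = (x ^ (2 ^ E) * w + x * w ^ (2 ^ E)) + (w ^ (2 ^ E + 1) + a * w) := by
    intro x w
    have hb : (x + w) ^ (2 ^ E) = x ^ (2 ^ E) + w ^ (2 ^ E) := add_pow_char_pow (p := 2) (n := E) (x := x) (y := w)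
    rw [pow_succ x, pow_succ (x + w), pow_succ w, hb]
    linear_combination (x ^ (2 ^ E) * x + a * x) * h2c
  have hsplit2 : ∀ x w : GaloisField 2 m,
      eps ((x ^ (2 ^ E) * w + x * w ^ (2 ^ E)) + (w ^ (2 ^ E + 1) + a * w))
        = eps (x ^ (2 ^ E) * w + x * w ^ (2 ^ E)) * eps (w ^ (2 ^ E + 1) + a * w) :=
    fun x w => eps_add _ _
  simp_rw [hexpand, hsplit2]
  -- swap sums and evaluate the inner (bilinear) sum
  rw [Finset.sum_comm]
  have hbil : ∀ w x : GaloisField 2 m,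
      eps (x ^ (2 ^ E) * w + x * w ^ (2 ^ E))
        = eps ((w ^ (2 ^ (m - E)) + w ^ (2 ^ E)) * x) := by
    intro w x
    unfold eps
    congr 1
    have e1 : Ftr (x ^ (2 ^ E) * w) = Ftr (x * w ^ (2 ^ (m - E))) := by
      rw [← Ftr_pow_two_pow (m - E) (x ^ (2 ^ E) * w), mul_pow,
        ← pow_two_pow_add x E (m - E), Nat.add_sub_cancel' hEm.le, pow_card_GF hm0]
    rw [Ftr_add, e1, ← Ftr_add]
    congr 1
    ring
  simp_rw [hbil]
  have hinner : ∀ w : GaloisField 2 m,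
      ∑ x : GaloisField 2 m, eps ((w ^ (2 ^ (m - E)) + w ^ (2 ^ E)) * x)
        * eps (w ^ (2 ^ E + 1) + a * w)
      = (if w ^ (2 ^ (m - E)) + w ^ (2 ^ E) = 0 then (2:ℤ) ^ m else 0)
        * eps (w ^ (2 ^ E + 1) + a * w) := by
    intro w
    rw [← Finset.sum_mul, sum_eps_mul hm0]
  simp_rw [hinner, ite_mul, zero_mul]
  rw [← Finset.sum_filter]
  have hfilt : Finset.univ.filter
      (fun w : GaloisField 2 m => w ^ (2 ^ (m - E)) + w ^ (2 ^ E) = 0)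
      = {0, 1} := by
    ext w
    simp only [Finset.mem_filter, Finset.mem_univ, true_and, Finset.mem_insert,
      Finset.mem_singleton]
    exact roots_L hm0 hEm hg w
  rw [hfilt, Finset.sum_pair (zero_ne_one)]
  have h0 : (0 : GaloisField 2 m) ^ (2 ^ E + 1) + a * 0 = 0 := by
    rw [zero_pow (by positivity), mul_zero, add_zero]
  have h1 : (1 : GaloisField 2 m) ^ (2 ^ E + 1) + a * 1 = 1 + a := by
    rw [one_pow, mul_one]
  rw [h0, h1, eps_zero]
  ring

lemma pow_two_pow_emod (hm0 : m ≠ 0) (x : GaloisField 2 m) (e : ℕ) :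
    x ^ (2 ^ e) = x ^ (2 ^ (e % m)) := by
  have h := pow_fix_reduce x m (pow_card_GF hm0 x) (e / m) (e % m)
  rwa [Nat.div_add_mod] at h

lemma lamF_eq_sum_eps (S : Finset (GaloisField 2 m)) (x : GaloisField 2 m) :
    lamF S x = ∑ s ∈ S, eps (x * s) := rfl

lemma zmod2_cases (a : ZMod 2) : a = 0 ∨ a = 1 := by fin_cases a <;> [exact Or.inl rfl; exact Or.inr rfl]

lemma walsh_eq (hm0 : m ≠ 0) {E : ℕ}
    (f : GaloisField 2 m → ZMod 2) (hfE : ∀ x, f x = Ftr (x ^ (2 ^ E + 1)))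
    (S : Finset (GaloisField 2 m)) (hS : S = Finset.univ.filter (fun x => f x = 1))
    (a : GaloisField 2 m) :
    ∑ x : GaloisField 2 m, eps (x ^ (2 ^ E + 1) + a * x)
      = (if a = 0 then (2:ℤ) ^ m else 0) - 2 * lamF S a := by
  have hterm : ∀ x : GaloisField 2 m,
      eps (x ^ (2 ^ E + 1) + a * x)
        = eps (a * x) - 2 * (if f x = 1 then eps (a * x) else 0) := by
    intro x
    rw [eps_add]
    rcases zmod2_cases (f x) with h | h
    · have h1 : eps (x ^ (2 ^ E + 1)) = 1 := eps_eq_one _ (by rw [← hfE x]; exact h)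
      rw [h1, if_neg (by rw [h]; decide), one_mul, mul_zero, sub_zero]
    · have h1 : eps (x ^ (2 ^ E + 1)) = -1 := eps_eq_neg_one _ (by rw [← hfE x]; exact h)
      rw [h1, if_pos h]
      ring
  rw [Finset.sum_congr rfl (fun x _ => hterm x), Finset.sum_sub_distrib,
    ← Finset.mul_sum, sum_eps_mul hm0 a, ← Finset.sum_filter, ← hS, lamF_eq_sum_eps]

lemma lam_facts {k m e : ℕ} (hk : 1 ≤ k) (hm : m = 2 * k + 1)
    (hem : Nat.gcd e m = 1)
    (f : GaloisField 2 m → ZMod 2) (hf : ∀ x, f x = Ftr (x ^ (2 ^ e + 1)))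
    (S : Finset (GaloisField 2 m)) (hS : S = Finset.univ.filter (fun x => f x = 1)) :
    S.card = 2 ^ (2 * k) ∧
      ∀ y : GaloisField 2 m, Ftr y = 1 → lamF S y = 2 ^ k ∨ lamF S y = -2 ^ k := by
  have hm0 : m ≠ 0 := by omega
  have hmodd : Odd m := ⟨k, by omega⟩
  set E := e % m with hE
  have hE0 : E ≠ 0 := by
    intro h
    have hd : m ∣ e := Nat.dvd_of_mod_eq_zero h
    have : Nat.gcd e m = m := Nat.gcd_eq_right hd
    omega
  have hEm : E < m := Nat.mod_lt _ (by omega)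
  have hfE : ∀ x, f x = Ftr (x ^ (2 ^ E + 1)) := by
    intro x
    rw [hf]
    congr 1
    rw [pow_succ, pow_succ, pow_two_pow_emod hm0]
  have hgE : Nat.gcd E m = 1 := by
    have h1 : Nat.gcd m e = Nat.gcd (e % m) m := Nat.gcd_rec m e
    rw [Nat.gcd_comm] at hem
    rw [hE, ← h1, hem]
  have hg2E : Nat.gcd (2 * E) m = 1 :=
    Nat.Coprime.mul (hmodd.coprime_two_left) hgE
  have heps1 : eps (1 : GaloisField 2 m) = -1 :=
    eps_eq_neg_one 1 (Ftr_one hmodd hm0)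
  -- cardinality
  have hcard : S.card = 2 ^ (2 * k) := by
    have hWsq := walsh_sq hm0 hEm hg2E (0 : GaloisField 2 m)
    have hWeq := walsh_eq hm0 f hfE S hS (0 : GaloisField 2 m)
    rw [add_zero, heps1] at hWsq
    rw [if_pos rfl] at hWeq
    have hW0 : (∑ x : GaloisField 2 m, eps (x ^ (2 ^ E + 1) + 0 * x)) = 0 := by
      have := hWsq
      rw [show (1 : ℤ) + -1 = 0 by ring, mul_zero, sq_eq_zero_iff] at this
      exact this
    rw [hW0] at hWeq
    have hlam0 : lamF S 0 = (S.card : ℤ) := by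
      rw [lamF_eq_sum_eps]
      simp [eps_zero]
    rw [hlam0] at hWeq
    have h0 : (2:ℤ) ^ m = 2 * (S.card : ℤ) := by linarith
    have h1 : (2:ℤ) ^ m = 2 ^ (2 * k) * 2 := by rw [hm, pow_succ]
    have h2 : (S.card : ℤ) = 2 ^ (2 * k) := by linarith
    exact_mod_cast h2
  refine ⟨hcard, fun y hy => ?_⟩
  have hy0 : y ≠ 0 := by
    intro h
    rw [h, Ftr_zero] at hy
    exact absurd hy (by decide)
  have hWsq := walsh_sq hm0 hEm hg2E y
  have hWeq := walsh_eq hm0 f hfE S hS y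
  rw [if_neg hy0, zero_sub] at hWeq
  rw [eps_add, heps1, eps_eq_neg_one y hy, hWeq] at hWsq
  have hsq : (lamF S y) ^ 2 = (2 ^ k : ℤ) ^ 2 := by
    have e1 : ((-(2 * lamF S y)) ^ 2 : ℤ) = 4 * (lamF S y) ^ 2 := by ring
    rw [e1] at hWsq
    have e2 : (2:ℤ) ^ m * (1 + -1 * -1) = 2 * 2 ^ m := by ring
    rw [e2] at hWsq
    have e3 : (2:ℤ) ^ m = 2 ^ (2 * k) * 2 := by rw [hm, pow_succ]
    have e4 : ((2:ℤ) ^ k) ^ 2 = 2 ^ (2 * k) := by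
      rw [← pow_mul, Nat.mul_comm]
    rw [e3] at hWsq
    rw [e4]
    linarith
  have hfac : (lamF S y - 2 ^ k) * (lamF S y + 2 ^ k) = 0 := by linear_combination hsq
  rcases mul_eq_zero.1 hfac with h | h
  · exact Or.inl (by linarith)
  · exact Or.inr (by linarith)

/-! ### Characters of `ZMod 2 × GaloisField 2 m` over ℂ -/

def chi {m : ℕ} (g u : ZMod 2 × GaloisField 2 m) : ℂ :=
  (-1) ^ ((g.1 * u.1 + Ftr (g.2 * u.2)).val)

lemma chi_add (g u v : ZMod 2 × GaloisField 2 m) :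
    chi g (u + v) = chi g u * chi g v := by
  unfold chi
  have h : g.1 * (u + v).1 + Ftr (g.2 * (u + v).2)
      = (g.1 * u.1 + Ftr (g.2 * u.2)) + (g.1 * v.1 + Ftr (g.2 * v.2)) := by
    show g.1 * (u.1 + v.1) + Ftr (g.2 * (u.2 + v.2)) = _
    rw [mul_add, mul_add, Ftr_add]
    ring
  rw [h, neg_one_pow_val_add]

lemma self_add_self (u : ZMod 2 × GaloisField 2 m) : u + u = 0 := by
  apply Prod.ext
  · exact CharTwo.add_self_eq_zero u.1
  · exact CharTwo.add_self_eq_zero u.2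

lemma univ_zmod2 : (Finset.univ : Finset (ZMod 2)) = {0, 1} := by decide

lemma sum_zmod2 {M : Type*} [AddCommMonoid M] (f : ZMod 2 → M) :
    ∑ δ : ZMod 2, f δ = f 0 + f 1 := by
  rw [univ_zmod2, Finset.sum_pair (by decide)]

lemma sum_chi_snd (hm0 : m ≠ 0) (c : GaloisField 2 m) :
    ∑ y : GaloisField 2 m, (-1 : ℂ) ^ (Ftr (y * c)).val
      = if c = 0 then (2 ^ m : ℂ) else 0 := by
  have h : ∀ y : GaloisField 2 m, (-1 : ℂ) ^ (Ftr (y * c)).val = ((eps (c * y) : ℤ) : ℂ) := by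
    intro y
    rw [mul_comm y c]
    unfold eps
    push_cast
    ring
  simp_rw [h]
  rw [← Int.cast_sum, sum_eps_mul hm0 c]
  split_ifs <;> push_cast <;> ring

lemma sum_chi (hm0 : m ≠ 0) (w : ZMod 2 × GaloisField 2 m) :
    ∑ g : ZMod 2 × GaloisField 2 m, chi g w
      = if w = 0 then (2 ^ (m + 1) : ℂ) else 0 := by
  obtain ⟨w1, w2⟩ := w
  unfold chi
  rw [Fintype.sum_prod_type]
  have hsplit : ∀ (δ : ZMod 2) (y : GaloisField 2 m),
      ((-1 : ℂ)) ^ ((δ * w1 + Ftr (y * w2)).val)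
        = (-1 : ℂ) ^ ((δ * w1).val) * (-1 : ℂ) ^ ((Ftr (y * w2)).val) :=
    fun δ y => neg_one_pow_val_add _ _
  simp_rw [hsplit, ← Finset.mul_sum, ← Finset.sum_mul, sum_chi_snd hm0 w2]
  have hfst : ∑ δ : ZMod 2, (-1 : ℂ) ^ ((δ * w1).val)
      = if w1 = 0 then 2 else 0 := by
    rw [sum_zmod2]
    rcases zmod2_cases w1 with h | h <;> rw [h] <;> norm_num <;>
      simp [ZMod.val_one, show ((0:ZMod 2)).val = 0 from rfl]
  rw [hfst]
  have hpe : ((w1, w2) = (0 : ZMod 2 × GaloisField 2 m)) ↔ (w1 = 0 ∧ w2 = 0) := by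
    rw [Prod.ext_iff]; rfl
  by_cases h1 : w1 = 0 <;> by_cases h2 : w2 = 0
  · rw [if_pos h1, if_pos h2, if_pos (hpe.2 ⟨h1, h2⟩), pow_succ]; ring
  · rw [if_pos h1, if_neg h2, if_neg (fun h => h2 (hpe.1 h).2)]; ring
  · rw [if_neg h1, if_pos h2, if_neg (fun h => h1 (hpe.1 h).1)]; ring
  · rw [if_neg h1, if_neg h2, if_neg (fun h => h1 (hpe.1 h).1)]; ring

/-- eigenvalue of the adjacency matrix on the character `chi g`. -/
lemma adj_mulVec_chi (S' : Finset (ZMod 2 × GaloisField 2 m))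
    (g : ZMod 2 × GaloisField 2 m) :
    adjMatrix S' *ᵥ chi g = (∑ s ∈ S', chi g s) • chi g := by
  funext u
  show ∑ v, (if u + v ∈ S' then (1:ℂ) else 0) * chi g v = _
  have h1 : ∀ v, (if u + v ∈ S' then (1:ℂ) else 0) * chi g v
      = if u + v ∈ S' then chi g v else 0 := by
    intro v; split_ifs <;> ring
  simp_rw [h1]
  have h2 : ∑ v, (if u + v ∈ S' then chi g v else 0)
      = ∑ s : ZMod 2 × GaloisField 2 m, (if s ∈ S' then chi g (u + s) else 0) := by
    refine (Fintype.sum_equiv (Equiv.addLeft u) _ _ ?_).symm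
    intro s
    have : u + (u + s) = s := by rw [← add_assoc, self_add_self, zero_add]
    show (if s ∈ S' then chi g (u + s) else 0) = (if u + (u + s) ∈ S' then chi g (u + s) else 0)
    rw [this]
  rw [h2, Finset.sum_ite_mem, Finset.univ_inter]
  have h3 : ∑ s ∈ S', chi g (u + s) = ∑ s ∈ S', chi g u * chi g s := by
    exact Finset.sum_congr rfl (fun s _ => chi_add g u s)
  rw [h3, ← Finset.mul_sum]
  show _ = (∑ s ∈ S', chi g s) * chi g u
  ring

/-- Fourier decomposition of `e_a - e_b`. -/
lemma stdBasis_sub_decomp (hm0 : m ≠ 0) (a b : ZMod 2 × GaloisField 2 m) :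
    _root_.stdBasis a - _root_.stdBasis b
      = ((2:ℂ) ^ (m + 1))⁻¹ • ∑ g : ZMod 2 × GaloisField 2 m,
          (chi g a - chi g b) • chi g := by
  funext u
  have hN : ((2:ℂ) ^ (m + 1)) ≠ 0 := pow_ne_zero _ two_ne_zero
  simp only [Pi.sub_apply, Pi.smul_apply, Finset.sum_apply, smul_eq_mul]
  have h1 : ∀ g : ZMod 2 × GaloisField 2 m,
      (chi g a - chi g b) * chi g u = chi g (a + u) - chi g (b + u) := by
    intro g
    rw [chi_add, chi_add]
    ring
  simp_rw [h1]
  rw [Finset.sum_sub_distrib, sum_chi hm0, sum_chi hm0]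
  have hiff : ∀ x : ZMod 2 × GaloisField 2 m, (x + u = 0) = (u = x) := by
    intro x
    apply propext
    constructor
    · intro h
      have h' := congrArg (x + ·) h
      rw [← add_assoc, self_add_self, zero_add, add_zero] at h'
      exact h'
    · rintro rfl
      exact self_add_self _
  simp only [hiff]
  unfold _root_.stdBasis
  split_ifs <;> field_simp <;> ring

lemma exp_mulVec_eigen {n : Type*} [Fintype n] [DecidableEq n]
    (A : Matrix n n ℂ) (v : n → ℂ) (μ : ℂ) (h : A *ᵥ v = μ • v) :
    NormedSpace.exp A *ᵥ v = Complex.exp μ • v := by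
  letI : NormedRing (Matrix n n ℂ) := Matrix.linftyOpNormedRing
  letI : NormedAlgebra ℂ (Matrix n n ℂ) := Matrix.linftyOpNormedAlgebra
  have hpow : ∀ j : ℕ, A ^ j *ᵥ v = μ ^ j • v := by
    intro j
    induction j with
    | zero => simp
    | succ j ih =>
      rw [pow_succ', pow_succ', ← Matrix.mulVec_mulVec, ih, Matrix.mulVec_smul, h,
        smul_smul, mul_comm]
  let L : Matrix n n ℂ →ₗ[ℂ] (n → ℂ) :=
    { toFun := fun M => M *ᵥ v
      map_add' := fun M N => Matrix.add_mulVec M N v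
      map_smul' := fun c M => Matrix.smul_mulVec c M v }
  have hL : Continuous L := L.continuous_of_finiteDimensional
  let L' : Matrix n n ℂ →L[ℂ] (n → ℂ) := ⟨L, hL⟩
  have hsum : Summable fun j : ℕ => ((j.factorial : ℂ)⁻¹) • A ^ j :=
    NormedSpace.expSeries_summable' A
  have : NormedSpace.exp A *ᵥ v = L' (NormedSpace.exp A) := rfl
  rw [this, NormedSpace.exp_eq_tsum (𝕂 := ℂ), L'.map_tsum hsum]
  have : ∀ j : ℕ, L' (((j.factorial : ℂ)⁻¹) • A ^ j)
      = ((j.factorial : ℂ)⁻¹ * μ ^ j) • v := by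
    intro j
    show ((j.factorial : ℂ)⁻¹ • A ^ j) *ᵥ v = _
    rw [Matrix.smul_mulVec]
    rw [hpow j, smul_smul]
  simp_rw [this]
  rw [Summable.tsum_smul_const]
  · congr 1
    rw [Complex.exp_eq_exp_ℂ, NormedSpace.exp_eq_tsum (𝕂 := ℂ)]
    simp_rw [smul_eq_mul]
  · have := NormedSpace.expSeries_summable' (𝕂 := ℂ) μ
    simpa [smul_eq_mul] using this

lemma dot_std_sub {G : Type*} [AddCommGroup G] [Fintype G] [DecidableEq G]
    (c d : G) (w : G → ℂ) :
    dotProduct (_root_.stdBasis c - _root_.stdBasis d) w = w c - w d := by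
  unfold dotProduct _root_.stdBasis
  simp only [Pi.sub_apply, sub_mul, ite_mul, one_mul, zero_mul]
  rw [Finset.sum_sub_distrib]
  congr 1 <;> rw [Finset.sum_ite_eq' Finset.univ _ w] <;> simp

lemma sum_sign_mul (c : ZMod 2) :
    ∑ δ : ZMod 2, (-1 : ℂ) ^ ((c * δ).val) = if c = 0 then 2 else 0 := by
  rw [sum_zmod2]
  rcases zmod2_cases c with h | h <;> rw [h] <;> norm_num <;>
    simp [ZMod.val_one, show ((0:ZMod 2)).val = 0 from rfl]

lemma lamG_eval (S : Finset (GaloisField 2 m))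
    (S' : Finset (ZMod 2 × GaloisField 2 m))
    (hS' : S' = (Finset.univ : Finset (ZMod 2)) ×ˢ S)
    (δ : ZMod 2) (y : GaloisField 2 m) :
    ∑ s ∈ S', chi (δ, y) s
      = (if δ = 0 then 2 else 0) * ((lamF S y : ℤ) : ℂ) := by
  rw [hS', Finset.sum_product]
  have h1 : ∀ (ε : ZMod 2) (s : GaloisField 2 m),
      chi (δ, y) (ε, s) = (-1 : ℂ) ^ ((δ * ε).val) * (-1 : ℂ) ^ ((Ftr (y * s)).val) :=
    fun ε s => neg_one_pow_val_add _ _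
  simp_rw [h1]
  rw [← Finset.sum_mul_sum, sum_sign_mul]
  congr 1
  unfold lamF
  push_cast
  rfl

lemma exp_eval (k : ℕ) (lam : ℤ) (h : lam = 2 ^ k ∨ lam = -2 ^ k) :
    Complex.exp (Complex.I * ((Real.pi / 2 ^ (k + 1) : ℝ) : ℂ) * (2 * (lam : ℂ))) = -1 := by
  have h2 : ((2 : ℂ) ^ (k + 1)) ≠ 0 := pow_ne_zero _ two_ne_zero
  have hcast : ((Real.pi / 2 ^ (k + 1) : ℝ) : ℂ) = (Real.pi : ℂ) / 2 ^ (k + 1) := by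
    push_cast
    ring
  rcases h with h | h <;> subst h
  · have harg : Complex.I * ((Real.pi : ℂ) / 2 ^ (k + 1)) * (2 * (((2:ℤ) ^ k : ℤ) : ℂ))
        = (Real.pi : ℂ) * Complex.I := by
      push_cast
      field_simp
      ring
    rw [hcast, harg, Complex.exp_pi_mul_I]
  · rw [hcast]
    rw [show (((-(2:ℤ) ^ k : ℤ)) : ℂ) = -(((2:ℤ) ^ k : ℤ) : ℂ) by push_cast; ring]
    have : Complex.I * ((Real.pi : ℂ) / 2 ^ (k + 1)) * (2 * -(((2:ℤ) ^ k : ℤ) : ℂ))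
        = -((Real.pi : ℂ) * Complex.I) := by
      push_cast
      field_simp
      ring
    rw [this, Complex.exp_neg, Complex.exp_pi_mul_I]
    norm_num

/-- Lifting the semi-bent function `f(x) = Tr(x^{2^e+1})` on `𝔽_{2^{2k+1}}`:
`|supp(f)| = 2^{2k}` and the cubelike graph on `𝔽₂ × 𝔽_{2^m}` with connection set
`S' = 𝔽₂ × supp(f)` has PEST from `((0,0),(1,1))` to `((0,1),(1,0))` at time
`π/2^{k+1}` (Theorem: semi-bent construction). -/
theorem hasPEST_of_semibent {k m e : ℕ} (hk : 1 ≤ k) (hm : m = 2 * k + 1)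
    (he : 1 ≤ e) (hem : Nat.gcd e m = 1)
    (f : GaloisField 2 m → ZMod 2) (hf : ∀ x, f x = Ftr (x ^ (2 ^ e + 1)))
    (S : Finset (GaloisField 2 m)) (hS : S = univ.filter (fun x => f x = 1))
    (S' : Finset (ZMod 2 × GaloisField 2 m))
    (hS' : S' = (univ : Finset (ZMod 2)) ×ˢ S) :
    S.card = 2 ^ (2 * k) ∧
      hasPEST S' ((0 : ZMod 2), (0 : GaloisField 2 m))
        ((1 : ZMod 2), (1 : GaloisField 2 m))
        ((0 : ZMod 2), (1 : GaloisField 2 m))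
        ((1 : ZMod 2), (0 : GaloisField 2 m))
        (Real.pi / 2 ^ (k + 1)) := by
  have hm0 : m ≠ 0 := by omega
  obtain ⟨hcard, hlam⟩ := lam_facts hk hm hem f hf S hS
  refine ⟨hcard, ?_⟩
  unfold hasPEST
  set t : ℝ := Real.pi / 2 ^ (k + 1) with ht
  set va : ZMod 2 × GaloisField 2 m := (0, 0) with hva
  set vb : ZMod 2 × GaloisField 2 m := (1, 1) with hvb
  set vc : ZMod 2 × GaloisField 2 m := (0, 1) with hvc
  set vd : ZMod 2 × GaloisField 2 m := (1, 0) with hvd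
  -- transfer matrix acting on characters
  have heig : ∀ g : ZMod 2 × GaloisField 2 m, transferMatrix S' t *ᵥ chi g
      = Complex.exp (Complex.I * (t : ℂ) * (∑ s ∈ S', chi g s)) • chi g := by
    intro g
    apply exp_mulVec_eigen
    rw [smul_mulVec, smul_mulVec, adj_mulVec_chi, smul_smul, smul_smul,
      mul_assoc]
  -- image of e_a - e_b
  have hX : transferMatrix S' t *ᵥ (stdBasis va - stdBasis vb)
      = ((2:ℂ) ^ (m + 1))⁻¹ • ∑ g : ZMod 2 × GaloisField 2 m,
          ((chi g va - chi g vb)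
            * Complex.exp (Complex.I * (t : ℂ) * (∑ s ∈ S', chi g s))) • chi g := by
    rw [stdBasis_sub_decomp hm0]
    have hlin : ∀ v : (ZMod 2 × GaloisField 2 m) → ℂ,
        transferMatrix S' t *ᵥ v = (transferMatrix S' t).mulVecLin v := fun _ => rfl
    rw [hlin, _root_.map_smul, map_sum]
    congr 1
    refine Finset.sum_congr rfl (fun g _ => ?_)
    rw [_root_.map_smul, ← hlin, heig g, smul_smul]
  rw [hX, dot_std_sub]
  -- pointwise evaluation of the vector
  have happ : ∀ u : ZMod 2 × GaloisField 2 m,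
      (((2:ℂ) ^ (m + 1))⁻¹ • ∑ g : ZMod 2 × GaloisField 2 m,
          ((chi g va - chi g vb)
            * Complex.exp (Complex.I * (t : ℂ) * (∑ s ∈ S', chi g s))) • chi g) u
      = ((2:ℂ) ^ (m + 1))⁻¹ * ∑ g : ZMod 2 × GaloisField 2 m,
          ((chi g va - chi g vb)
            * Complex.exp (Complex.I * (t : ℂ) * (∑ s ∈ S', chi g s))) * chi g u := by
    intro u
    simp [Finset.sum_apply]
  rw [happ, happ, ← mul_sub, ← Finset.sum_sub_distrib]
  -- the main sum
  have hmain : ∑ g : ZMod 2 × GaloisField 2 m,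
      (((chi g va - chi g vb)
          * Complex.exp (Complex.I * (t : ℂ) * (∑ s ∈ S', chi g s))) * chi g vc
        - ((chi g va - chi g vb)
          * Complex.exp (Complex.I * (t : ℂ) * (∑ s ∈ S', chi g s))) * chi g vd)
      = 4 * 2 ^ m := by
    have hterm : ∀ g : ZMod 2 × GaloisField 2 m,
        ((chi g va - chi g vb)
            * Complex.exp (Complex.I * (t : ℂ) * (∑ s ∈ S', chi g s))) * chi g vc
          - ((chi g va - chi g vb)
            * Complex.exp (Complex.I * (t : ℂ) * (∑ s ∈ S', chi g s))) * chi g vd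
        = (chi g va - chi g vb)
            * Complex.exp (Complex.I * (t : ℂ) * (∑ s ∈ S', chi g s))
            * (chi g vc - chi g vd) := by
      intro g
      ring
    simp_rw [hterm]
    rw [Fintype.sum_prod_type_right]
    have hy : ∀ y : GaloisField 2 m,
        ∑ δ : ZMod 2, (chi (δ, y) va - chi (δ, y) vb)
            * Complex.exp (Complex.I * (t : ℂ) * (∑ s ∈ S', chi (δ, y) s))
            * (chi (δ, y) vc - chi (δ, y) vd) = 4 := by
      intro y
      -- character values
      have hca : ∀ δ : ZMod 2, chi (δ, y) va = 1 := by
        intro δ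
        show (-1:ℂ) ^ ((δ * 0 + Ftr (y * 0)).val) = 1
        rw [mul_zero, mul_zero, Ftr_zero, add_zero]
        rfl
      have hcb : ∀ δ : ZMod 2, chi (δ, y) vb = (-1:ℂ) ^ ((δ + Ftr y).val) := by
        intro δ
        show (-1:ℂ) ^ ((δ * 1 + Ftr (y * 1)).val) = _
        rw [mul_one, mul_one]
      have hcc : ∀ δ : ZMod 2, chi (δ, y) vc = (-1:ℂ) ^ ((Ftr y).val) := by
        intro δ
        show (-1:ℂ) ^ ((δ * 0 + Ftr (y * 1)).val) = _
        rw [mul_zero, mul_one, zero_add]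
      have hcd : ∀ δ : ZMod 2, chi (δ, y) vd = (-1:ℂ) ^ (δ.val) := by
        intro δ
        show (-1:ℂ) ^ ((δ * 1 + Ftr (y * 0)).val) = _
        rw [mul_one, mul_zero, Ftr_zero, add_zero]
      simp_rw [hca, hcb, hcc, hcd, lamG_eval S S' hS' _ y]
      rw [sum_zmod2]
      rw [if_pos rfl, if_neg (by decide : ¬ (1 : ZMod 2) = 0)]
      rcases zmod2_cases (Ftr y) with hy0 | hy0 <;> rw [hy0]
      · -- Ftr y = 0 : only the δ = 1 term survives
        rw [zero_mul, mul_zero, Complex.exp_zero]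
        norm_num [ZMod.val_one, show ((0:ZMod 2) + 0) = 0 from by decide,
          show ((1:ZMod 2) + 0) = 1 from by decide,
          show ((0:ZMod 2)).val = 0 from rfl]
      · -- Ftr y = 1
        have hexp := exp_eval k (lamF S y) (hlam y hy0)
        rw [zero_mul, mul_zero, Complex.exp_zero]
        have h2lam : Complex.I * (t : ℂ) * (2 * ((lamF S y : ℤ) : ℂ))
            = Complex.I * ((Real.pi / 2 ^ (k + 1) : ℝ) : ℂ) * (2 * ((lamF S y : ℤ) : ℂ)) := by
          rw [ht]
        rw [h2lam, hexp]
        norm_num [ZMod.val_one, show ((0:ZMod 2) + 1) = 1 from by decide,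
          show ((1:ZMod 2) + 1) = 0 from by decide,
          show ((0:ZMod 2)).val = 0 from rfl]
    simp_rw [hy]
    rw [Finset.sum_const, Finset.card_univ, card_GF hm0]
    push_cast
    ring
  rw [hmain]
  have : (1 / 2 : ℂ) * (((2:ℂ) ^ (m + 1))⁻¹ * (4 * 2 ^ m)) = 1 := by
    have h2 : ((2:ℂ) ^ (m + 1)) ≠ 0 := pow_ne_zero _ two_ne_zero
    field_simp
    rw [pow_succ]
    ring
  rw [this]
  simp


end
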